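/- Let W and T be real n×n matrices with W symmetric positive definite and T symmetric positive semidefinite, and let μ_min and μ_max be the smallest and largest eigenvalues of S = W^{-1/2} T W^{-1/2}. Assume 1 ≤ μ_min and 1 < μ_max. If 0 < α < (μ_max+1)/(μ_max-1) and β > (μ_max-1)/(μ_max+1), then ρ(G_{α,β}) < 1. -/

import Mathlib

open Matrix

/-- The old Mathlib `Matrix.PosSemidef.sqrt` (removed upstream), with its original definition. -/
noncomputable def Matrix.PosSemidef.sqrt {n : Type*} [Fintype n] [DecidableEq n]
    {A : Matrix n n ℝ} (hA : A.PosSemidef) : Matrix n n ℝ :=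
  hA.1.eigenvectorUnitary.1 * diagonal ((↑) ∘ (√·) ∘ hA.1.eigenvalues) *
    (star hA.1.eigenvectorUnitary : Matrix n n ℝ)

lemma ttscsp_scalar (μ μmax α β : ℝ) (h1 : 1 ≤ μ) (h2 : μ ≤ μmax) (hmax : 1 < μmax)
    (hα0 : 0 < α) (hα2 : α < (μmax + 1) / (μmax - 1)) (hβ : (μmax - 1) / (μmax + 1) < β) :
    |(1 + β * μ)⁻¹ * (μ - β) * ((α + μ)⁻¹ * (1 - α * μ))| < 1 := by
  have hm1 : 0 < μmax - 1 := by linarith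
  have hm2 : 0 < μmax + 1 := by linarith
  have hβ0 : 0 < β := lt_trans (div_pos hm1 hm2) hβ
  have ha : 0 < 1 + β * μ := by nlinarith
  have hb : 0 < α + μ := by linarith
  have hα2' : α * (μmax - 1) < μmax + 1 := (lt_div_iff₀ hm1).mp hα2
  have hβ' : μmax - 1 < β * (μmax + 1) := (div_lt_iff₀ hm2).mp hβ
  have k1 : |μ - β| < 1 + β * μ := by
    rw [abs_lt]
    constructor
    · nlinarith [mul_nonneg hβ0.le (sub_nonneg.mpr h1)]
    · nlinarith [mul_pos (show (0:ℝ) < μ + 1 by linarith)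
        (show (0:ℝ) < β * (μmax + 1) - (μmax - 1) by linarith)]
  have k2 : |1 - α * μ| < α + μ := by
    rw [abs_lt]
    constructor
    · rcases eq_or_lt_of_le h1 with h | h
      · rw [← h]; linarith
      · nlinarith [mul_lt_mul_of_pos_left hα2' (show (0:ℝ) < μ - 1 by linarith)]
    · nlinarith [mul_pos hα0 (show (0:ℝ) < 1 + μ by linarith)]
  have habs : |(1 + β * μ)⁻¹ * (μ - β) * ((α + μ)⁻¹ * (1 - α * μ))|
      = |μ - β| * |1 - α * μ| / ((1 + β * μ) * (α + μ)) := by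
    rw [abs_mul, abs_mul, abs_mul, abs_inv, abs_inv, abs_of_pos ha, abs_of_pos hb]
    field_simp
  rw [habs, div_lt_one (by positivity)]
  exact mul_lt_mul'' k1 k2 (abs_nonneg _) (abs_nonneg _)


/-- **Remark 1, second case.** If all eigenvalues of `S = W^{-1/2} T W^{-1/2}` are at least one
(i.e. `1 ≤ μmin`) and `1 < μmax`, then `0 < α < (μmax+1)/(μmax-1)` and `β > (μmax-1)/(μmax+1)`
imply that the spectral radius of the TTSCSP iteration matrix is less than one. -/
theorem ttscsp_convergence_eigen_ge_one
    {n : ℕ} (hn : 0 < n)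
    (W T : Matrix (Fin n) (Fin n) ℝ)
    (hW : W.PosDef) (hT : T.PosSemidef)
    (S : Matrix (Fin n) (Fin n) ℝ)
    (hSdef : S = (hW.posSemidef.sqrt)⁻¹ * T * (hW.posSemidef.sqrt)⁻¹)
    (hS : S.IsHermitian)
    (μmin μmax : ℝ)
    (hμmin : μmin = ⨅ i, hS.eigenvalues i)
    (hμmax : μmax = ⨆ i, hS.eigenvalues i)
    (hmin1 : 1 ≤ μmin) (hmax1 : 1 < μmax)
    (α β : ℝ)
    (hα0 : 0 < α) (hα2 : α < (μmax + 1) / (μmax - 1))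
    (hβ1 : (μmax - 1) / (μmax + 1) < β) :
    spectralRadius ℂ
      (((W + β • T)⁻¹ * (T - β • W) * (α • W + T)⁻¹ * (W - α • T)).map Complex.ofReal) < 1 := by
  classical
  set R : Matrix (Fin n) (Fin n) ℝ := hW.posSemidef.sqrt with hRdef
  have hRR : R * R = W := by
    have key : ∀ A D B : Matrix (Fin n) (Fin n) ℝ, B * A = 1 →
        A * D * B * (A * D * B) = A * (D * D) * B := by
      intro A D B h
      simp only [Matrix.mul_assoc]
      rw [← Matrix.mul_assoc B A, h, Matrix.one_mul]
    rw [hRdef, Matrix.PosSemidef.sqrt, key _ _ _ (by simp), diagonal_mul_diagonal]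
    conv_rhs => rw [hW.posSemidef.1.spectral_theorem, Unitary.conjStarAlgAut_apply]
    congr 2
    congr 1
    funext i
    simp [Real.mul_self_sqrt (hW.posSemidef.eigenvalues_nonneg i)]
  have hdetW : W.det ≠ 0 := hW.det_pos.ne'
  have hdetR : IsUnit R.det := by
    rw [isUnit_iff_ne_zero]
    intro h
    apply hdetW
    rw [← hRR, det_mul, h, mul_zero]
  have hRinv : R * R⁻¹ = 1 := mul_nonsing_inv _ hdetR
  have hRinv' : R⁻¹ * R = 1 := nonsing_inv_mul _ hdetR
  have hT2 : R * S * R = T := by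
    rw [hSdef]
    simp only [← Matrix.mul_assoc, ← hRdef]
    rw [hRinv, Matrix.one_mul, Matrix.mul_assoc, hRinv', Matrix.mul_one]
  set U : Matrix (Fin n) (Fin n) ℝ := (hS.eigenvectorUnitary : Matrix (Fin n) (Fin n) ℝ) with hUdef
  set eig : Fin n → ℝ := hS.eigenvalues with heig
  have hspec : S = U * diagonal eig * star U := by
    have := hS.spectral_theorem
    rw [Unitary.conjStarAlgAut_apply] at this
    rwa [show (RCLike.ofReal ∘ hS.eigenvalues : Fin n → ℝ) = eig by
      funext i; rfl] at this
  have hUstar : U * star U = 1 := Matrix.mem_unitaryGroup_iff.mp (hS.eigenvectorUnitary).2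
  have hstarU : star U * U = 1 := Matrix.mem_unitaryGroup_iff'.mp (hS.eigenvectorUnitary).2
  -- eigenvalue bounds
  have hle : ∀ i, 1 ≤ eig i := fun i =>
    le_trans hmin1 (hμmin ▸ ciInf_le (Set.Finite.bddBelow (Set.finite_range _)) i)
  have hge : ∀ i, eig i ≤ μmax := fun i =>
    hμmax ▸ le_ciSup (Set.Finite.bddAbove (Set.finite_range _)) i
  have hm1 : (0:ℝ) < μmax - 1 := by linarith
  have hm2 : (0:ℝ) < μmax + 1 := by linarith
  have hβ0 : (0:ℝ) < β := lt_trans (div_pos hm1 hm2) hβ1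
  -- generic conjugation identity
  have hconj : ∀ c d : ℝ, c • W + d • T
      = R * U * diagonal (fun i => c + d * eig i) * (star U * R) := by
    intro c d
    have hdiag : diagonal (fun i => c + d * eig i)
        = c • (1 : Matrix (Fin n) (Fin n) ℝ) + d • diagonal eig := by
      ext i j
      by_cases h : i = j <;> simp [h, Matrix.diagonal_apply, Matrix.one_apply]
    have h1 : U * diagonal (fun i => c + d * eig i) * star U
        = c • (1 : Matrix (Fin n) (Fin n) ℝ) + d • S := by
      rw [hdiag]
      simp only [Matrix.mul_add, Matrix.add_mul, Matrix.mul_smul, Matrix.smul_mul,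
        Matrix.mul_one]
      rw [hUstar, ← hspec]
    have : R * U * diagonal (fun i => c + d * eig i) * (star U * R)
        = R * (U * diagonal (fun i => c + d * eig i) * star U) * R := by
      simp only [Matrix.mul_assoc]
    rw [this, h1]
    simp only [Matrix.mul_add, Matrix.add_mul, Matrix.mul_smul, Matrix.smul_mul,
      Matrix.mul_one]
    rw [hRR, hT2]
  -- diagonal inverse
  have hdiaginv : ∀ v : Fin n → ℝ, (∀ i, v i ≠ 0) →
      (diagonal v)⁻¹ = diagonal (fun i => (v i)⁻¹) := by
    intro v hv
    apply inv_eq_right_inv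
    rw [diagonal_mul_diagonal]
    have : (fun i => v i * (v i)⁻¹) = fun _ => (1:ℝ) := by
      funext i; exact mul_inv_cancel₀ (hv i)
    rw [this, diagonal_one]
  -- inverse of conjugated factor
  have hUinv : U⁻¹ = star U := inv_eq_right_inv hUstar
  have hstarUinv : (star U)⁻¹ = U := inv_eq_right_inv hstarU
  have hconjinv : ∀ v : Fin n → ℝ, (∀ i, v i ≠ 0) →
      (R * U * diagonal v * (star U * R))⁻¹
        = R⁻¹ * U * diagonal (fun i => (v i)⁻¹) * (star U * R⁻¹) := by
    intro v hv
    rw [Matrix.mul_inv_rev, Matrix.mul_inv_rev, Matrix.mul_inv_rev, Matrix.mul_inv_rev,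
      hdiaginv v hv, hUinv, hstarUinv]
    simp only [Matrix.mul_assoc]
  -- the four factors
  have e1 : W + β • T = R * U * diagonal (fun i => 1 + β * eig i) * (star U * R) := by
    rw [← hconj 1 β, one_smul]
  have e2 : T - β • W = R * U * diagonal (fun i => -β + 1 * eig i) * (star U * R) := by
    rw [← hconj (-β) 1, one_smul, neg_smul]; abel
  have e3 : α • W + T = R * U * diagonal (fun i => α + 1 * eig i) * (star U * R) := by
    rw [← hconj α 1, one_smul]
  have e4 : W - α • T = R * U * diagonal (fun i => 1 + -α * eig i) * (star U * R) := by
    rw [← hconj 1 (-α), one_smul, neg_smul]; abel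
  have hv1 : ∀ i, (1 + β * eig i) ≠ 0 := fun i => by nlinarith [hle i]
  have hv3 : ∀ i, (α + 1 * eig i) ≠ 0 := fun i => by nlinarith [hle i]
  -- the collapsed form
  set g : Fin n → ℝ :=
    fun i => (1 + β * eig i)⁻¹ * (-β + 1 * eig i) * ((α + 1 * eig i)⁻¹ * (1 + -α * eig i))
    with hgdef
  have c1 : ∀ X : Matrix (Fin n) (Fin n) ℝ, R⁻¹ * (R * X) = X := fun X => by
    rw [← Matrix.mul_assoc, hRinv', Matrix.one_mul]
  have c2 : ∀ X : Matrix (Fin n) (Fin n) ℝ, R * (R⁻¹ * X) = X := fun X => by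
    rw [← Matrix.mul_assoc, hRinv, Matrix.one_mul]
  have c3 : ∀ X : Matrix (Fin n) (Fin n) ℝ, star U * (U * X) = X := fun X => by
    rw [← Matrix.mul_assoc, hstarU, Matrix.one_mul]
  have c4 : ∀ X : Matrix (Fin n) (Fin n) ℝ, U * (star U * X) = X := fun X => by
    rw [← Matrix.mul_assoc, hUstar, Matrix.one_mul]
  have hG : (W + β • T)⁻¹ * (T - β • W) * (α • W + T)⁻¹ * (W - α • T)
      = R⁻¹ * U * diagonal g * (star U * R) := by
    rw [e1, e2, e3, e4, hconjinv _ hv1, hconjinv _ hv3]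
    have hgsplit : diagonal g
        = diagonal (fun i => (1 + β * eig i)⁻¹) * diagonal (fun i => -β + 1 * eig i)
          * (diagonal (fun i => (α + 1 * eig i)⁻¹) * diagonal (fun i => 1 + -α * eig i)) := by
      simp only [diagonal_mul_diagonal, hgdef]
    rw [hgsplit]
    simp only [Matrix.mul_assoc, c1, c2, c3, c4]
  -- pass to ℂ
  set φ : ℝ →+* ℂ := Complex.ofRealHom with hφdef
  have hmapeq : ((W + β • T)⁻¹ * (T - β • W) * (α • W + T)⁻¹ * (W - α • T)).map Complex.ofReal
      = ((R⁻¹ * U).map φ) * diagonal (fun i => (g i : ℂ)) * ((star U * R).map φ) := by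
    rw [hG]
    have : R⁻¹ * U * diagonal g * (star U * R)
        = (R⁻¹ * U) * diagonal g * (star U * R) := by simp only [Matrix.mul_assoc]
    rw [this]
    rw [show ((R⁻¹ * U) * diagonal g * (star U * R)).map Complex.ofReal
        = ((R⁻¹ * U) * diagonal g * (star U * R)).map φ from rfl]
    rw [Matrix.map_mul, Matrix.map_mul, Matrix.diagonal_map (map_zero φ)]
    rfl
  have hPQ : (R⁻¹ * U) * (star U * R) = 1 := by
    rw [Matrix.mul_assoc, ← Matrix.mul_assoc U, hUstar, Matrix.one_mul, hRinv']
  have hQP : (star U * R) * (R⁻¹ * U) = 1 := by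
    rw [Matrix.mul_assoc, ← Matrix.mul_assoc R, hRinv, Matrix.one_mul, hstarU]
  set u : (Matrix (Fin n) (Fin n) ℂ)ˣ :=
    { val := (R⁻¹ * U).map φ
      inv := (star U * R).map φ
      val_inv := by rw [← Matrix.map_mul, hPQ, Matrix.map_one φ (map_zero φ) (map_one φ)]
      inv_val := by rw [← Matrix.map_mul, hQP, Matrix.map_one φ (map_zero φ) (map_one φ)] }
    with hudef
  have hσ : spectrum ℂ
      (((W + β • T)⁻¹ * (T - β • W) * (α • W + T)⁻¹ * (W - α • T)).map Complex.ofReal)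
      = Set.range (fun i => (g i : ℂ)) := by
    rw [hmapeq]
    have : ((R⁻¹ * U).map φ) * diagonal (fun i => (g i : ℂ)) * ((star U * R).map φ)
        = (u : Matrix (Fin n) (Fin n) ℂ) * diagonal (fun i => (g i : ℂ))
          * ((u⁻¹ : (Matrix (Fin n) (Fin n) ℂ)ˣ) : Matrix (Fin n) (Fin n) ℂ) := rfl
    rw [this, spectrum.units_conjugate, spectrum_diagonal]
  -- conclude
  have hgeq : ∀ i, g i
      = (1 + β * eig i)⁻¹ * (eig i - β) * ((α + eig i)⁻¹ * (1 - α * eig i)) := by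
    intro i
    rw [hgdef]
    simp only [one_mul, neg_mul, neg_add_eq_sub, ← sub_eq_add_neg]
  have hglt : ∀ i, ‖(g i : ℂ)‖₊ < 1 := by
    intro i
    rw [Complex.nnnorm_real, ← NNReal.coe_lt_coe, NNReal.coe_one, coe_nnnorm,
      Real.norm_eq_abs, hgeq i]
    exact ttscsp_scalar (eig i) μmax α β (hle i) (hge i) hmax1 hα0 hα2 hβ1
  rw [spectralRadius, hσ]
  have hfin : Nonempty (Fin n) := ⟨⟨0, hn⟩⟩
  set c : NNReal := Finset.univ.sup (fun i : Fin n => ‖(g i : ℂ)‖₊) with hcdef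
  have hclt : c < 1 := by
    rw [hcdef, Finset.sup_lt_iff (by norm_num : (⊥ : NNReal) < 1)]
    intro i _
    exact hglt i
  calc ⨆ k ∈ Set.range (fun i => (g i : ℂ)), (‖k‖₊ : ENNReal)
      ≤ (c : ENNReal) := by
        refine iSup₂_le ?_
        rintro k ⟨i, rfl⟩
        exact ENNReal.coe_le_coe.mpr
          (Finset.le_sup (f := fun i : Fin n => ‖(g i : ℂ)‖₊) (Finset.mem_univ i))
    _ < 1 := by exact_mod_cast hclt
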